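/- Let T be the d-regular rooted tree, D ≥ 1, and let P, Q ≤ Aut(T^D) be minimal pattern subgroups. Suppose the group of finite type G_P is fractal. Then G_P and G_Q are conjugate in Aut(T) (i.e. there exists g ∈ Aut(T) with g G_P g^{-1} = G_Q) if and only if there exists g ∈ Aut(T) such that: (a) for every vertex v of T, (g|_v^D) P (g|_v^D)^{-1} = Q; and (b) for every n ≥ 1 and all vertices v, w of level n, (g|_v^D)(g|_w^D)^{-1} ∈ Q. Moreover, any g ∈ Aut(T) with g G_P g^{-1} = G_Q satisfies (a) and (b). -/

import Mathlib

theorem Equiv.Perm.apply_inv_self {α : Type*} (f : Equiv.Perm α) (x : α) : f (f⁻¹ x) = x :=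
  f.apply_symm_apply x

theorem Equiv.Perm.inv_apply_self {α : Type*} (f : Equiv.Perm α) (x : α) : f⁻¹ (f x) = x :=
  f.symm_apply_apply x

namespace TreeFT

/-- Vertices of the `d`-regular rooted tree: finite words over `Fin d`. -/
abbrev Vertex (d : ℕ) := List (Fin d)

/-- The automorphism group of the `d`-regular rooted tree, realized as the subgroup of
permutations of the vertex set that preserve length (levels) and prefixes (adjacency). -/
def treeAut (d : ℕ) : Subgroup (Equiv.Perm (Vertex d)) where
  carrier := {g | (∀ v : Vertex d, (g v).length = v.length) ∧
      (∀ v w : Vertex d, (g (v ++ w)).take v.length = g v)}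
  one_mem' := ⟨fun _ => rfl, fun v w => List.take_left⟩
  mul_mem' := by
    rintro g h ⟨hg1, hg2⟩ ⟨hh1, hh2⟩
    refine ⟨fun v => by rw [Equiv.Perm.mul_apply, hg1, hh1], fun v w => ?_⟩
    have h1 : h (v ++ w) = h v ++ (h (v ++ w)).drop v.length := by
      conv_lhs => rw [← List.take_append_drop v.length (h (v ++ w))]
      rw [hh2]
    rw [Equiv.Perm.mul_apply, Equiv.Perm.mul_apply, h1]
    have h2 : v.length = (h v).length := (hh1 v).symm
    rw [h2]
    exact hg2 _ _
  inv_mem' := by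
    rintro g ⟨hg1, hg2⟩
    constructor
    · intro v
      have h := hg1 (g⁻¹ v)
      rw [Equiv.Perm.apply_inv_self] at h
      exact h.symm
    · intro v w
      apply g.injective
      have hlen : v.length ≤ (g⁻¹ (v ++ w)).length := by
        have h := hg1 (g⁻¹ (v ++ w))
        rw [Equiv.Perm.apply_inv_self] at h
        rw [← h, List.length_append]
        exact Nat.le_add_right _ _
      have h3 := hg2 ((g⁻¹ (v ++ w)).take v.length) ((g⁻¹ (v ++ w)).drop v.length)
      rw [List.take_append_drop, Equiv.Perm.apply_inv_self, List.length_take,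
        min_eq_left hlen, List.take_left] at h3
      rw [← h3, Equiv.Perm.apply_inv_self]

variable {d : ℕ}

/-- `Aut(T)` as a type. -/
abbrev TAut (d : ℕ) := ↥(treeAut d)

lemma length_apply (g : TAut d) (v : Vertex d) :
    ((g : Equiv.Perm (Vertex d)) v).length = v.length := g.2.1 v

lemma take_apply (g : TAut d) (v w : Vertex d) :
    ((g : Equiv.Perm (Vertex d)) (v ++ w)).take v.length = (g : Equiv.Perm (Vertex d)) v :=
  g.2.2 v w

lemma apply_append (g : TAut d) (v w : Vertex d) :
    (g : Equiv.Perm (Vertex d)) (v ++ w) =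
      (g : Equiv.Perm (Vertex d)) v ++ ((g : Equiv.Perm (Vertex d)) (v ++ w)).drop v.length := by
  conv_lhs => rw [← List.take_append_drop v.length ((g : Equiv.Perm (Vertex d)) (v ++ w))]
  rw [take_apply]

/-- The section `g|_v` of a tree automorphism at the vertex `v`. -/
def sect (g : TAut d) (v : Vertex d) : TAut d :=
  ⟨{ toFun := fun w => ((g : Equiv.Perm (Vertex d)) (v ++ w)).drop v.length
     invFun := fun w =>
       (((g : Equiv.Perm (Vertex d)))⁻¹ ((g : Equiv.Perm (Vertex d)) v ++ w)).drop v.length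
     left_inv := by
       intro w
       show ((g : Equiv.Perm (Vertex d))⁻¹
         ((g : Equiv.Perm (Vertex d)) v ++
           ((g : Equiv.Perm (Vertex d)) (v ++ w)).drop v.length)).drop v.length = w
       rw [← apply_append g v w, Equiv.Perm.inv_apply_self, List.drop_left]
     right_inv := by
       intro w
       show ((g : Equiv.Perm (Vertex d))
         (v ++ ((g : Equiv.Perm (Vertex d))⁻¹
           ((g : Equiv.Perm (Vertex d)) v ++ w)).drop v.length)).drop v.length = w
       have h2 := apply_append g⁻¹ ((g : Equiv.Perm (Vertex d)) v) w
       simp only [InvMemClass.coe_inv] at h2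
       rw [Equiv.Perm.inv_apply_self, length_apply] at h2
       rw [← h2, Equiv.Perm.apply_inv_self, ← length_apply g v, List.drop_left] },
   by
    constructor
    · intro w
      simp only [Equiv.coe_fn_mk, List.length_drop, length_apply, List.length_append]
      omega
    · intro w u
      simp only [Equiv.coe_fn_mk]
      rw [← List.append_assoc]
      have h0 : ((g : Equiv.Perm (Vertex d)) ((v ++ w) ++ u)).take (v ++ w).length
          = (g : Equiv.Perm (Vertex d)) (v ++ w) := take_apply g (v ++ w) u
      have h1 : w.length = (v.length + w.length) - v.length := by omega
      rw [h1, ← List.drop_take, ← List.length_append, h0]⟩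

lemma sect_apply (g : TAut d) (v w : Vertex d) :
    ((sect g v : TAut d) : Equiv.Perm (Vertex d)) w
      = ((g : Equiv.Perm (Vertex d)) (v ++ w)).drop v.length := rfl

lemma sect_mul (g h : TAut d) (v : Vertex d) :
    sect (g * h) v = sect g ((h : Equiv.Perm (Vertex d)) v) * sect h v := by
  apply Subtype.ext
  apply Equiv.ext
  intro w
  simp only [MulMemClass.coe_mul, Equiv.Perm.mul_apply, sect_apply]
  rw [← apply_append h v w, length_apply]

lemma sect_one (v : Vertex d) : sect (1 : TAut d) v = 1 := by
  apply Subtype.ext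
  apply Equiv.ext
  intro w
  simp only [sect_apply, OneMemClass.coe_one, Equiv.Perm.coe_one, id_eq]
  exact List.drop_left

end TreeFT
namespace TreeFT

variable {d : ℕ}

/-- The stabilizer `St(n)` of the `n`-th level: automorphisms acting trivially on the first
`n` levels of the tree. -/
def lst (d n : ℕ) : Subgroup (TAut d) where
  carrier := {g | ∀ v : Vertex d, v.length ≤ n → (g : Equiv.Perm (Vertex d)) v = v}
  one_mem' := fun _ _ => rfl
  mul_mem' := by
    intro g h hg hh v hv
    show (g : Equiv.Perm (Vertex d)) ((h : Equiv.Perm (Vertex d)) v) = v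
    rw [hh v hv, hg v hv]
  inv_mem' := by
    intro g hg v hv
    show ((g : Equiv.Perm (Vertex d)))⁻¹ v = v
    apply (g : Equiv.Perm (Vertex d)).injective
    rw [Equiv.Perm.apply_inv_self, hg v hv]

lemma mem_lst {g : TAut d} {n : ℕ} :
    g ∈ lst d n ↔ ∀ v : Vertex d, v.length ≤ n → (g : Equiv.Perm (Vertex d)) v = v :=
  Iff.rfl

instance lst_normal (d n : ℕ) : (lst d n).Normal := by
  constructor
  intro s hs g v hv
  show (g : Equiv.Perm (Vertex d))
    ((s : Equiv.Perm (Vertex d)) (((g : Equiv.Perm (Vertex d)))⁻¹ v)) = v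
  have h1 : ((g⁻¹ : TAut d) : Equiv.Perm (Vertex d)) v = ((g : Equiv.Perm (Vertex d)))⁻¹ v := by
    simp
  have h2 : (((g : Equiv.Perm (Vertex d)))⁻¹ v).length ≤ n := by
    rw [← h1, length_apply]; exact hv
  rw [hs _ h2, Equiv.Perm.apply_inv_self]

/-- `Aut(T^n)`, the automorphism group of the finite tree consisting of the first `n` levels,
realized as the quotient of `Aut(T)` by the `n`-th level stabilizer. -/
abbrev FAut (d n : ℕ) := TAut d ⧸ lst d n

/-- `π_n : Aut(T) → Aut(T^n)`, restriction to the first `n` levels. -/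
def proj (d n : ℕ) : TAut d →* FAut d n := QuotientGroup.mk' (lst d n)

lemma proj_surjective (d n : ℕ) : Function.Surjective (proj d n) :=
  QuotientGroup.mk'_surjective _

/-- The group of finite type `G_P` of depth `D` with pattern group `P ≤ Aut(T^D)`:
all tree automorphisms whose section at every vertex acts on the first `D` levels as an
element of `P`. -/
def gft (d D : ℕ) (P : Subgroup (FAut d D)) : Subgroup (TAut d) where
  carrier := {g | ∀ v : Vertex d, proj d D (sect g v) ∈ P}
  one_mem' := by
    intro v
    rw [sect_one, map_one]
    exact one_mem P
  mul_mem' := by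
    intro g h hg hh v
    rw [sect_mul, map_mul]
    exact mul_mem (hg _) (hh _)
  inv_mem' := by
    intro g hg v
    have h2 : sect g (((g⁻¹ : TAut d) : Equiv.Perm (Vertex d)) v) * sect g⁻¹ v = 1 := by
      rw [← sect_mul, mul_inv_cancel, sect_one]
    have h3 : sect g⁻¹ v = (sect g (((g⁻¹ : TAut d) : Equiv.Perm (Vertex d)) v))⁻¹ :=
      (inv_eq_of_mul_eq_one_right h2).symm
    rw [h3, map_inv]
    exact inv_mem (hg _)

lemma mem_gft {g : TAut d} {D : ℕ} {P : Subgroup (FAut d D)} :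
    g ∈ gft d D P ↔ ∀ v : Vertex d, proj d D (sect g v) ∈ P := Iff.rfl

/-- `P ≤ Aut(T^D)` is a minimal pattern subgroup if `π_D(G_P) = P`. -/
def IsMinimalPattern (d D : ℕ) (P : Subgroup (FAut d D)) : Prop :=
  (gft d D P).map (proj d D) = P

/-- A subgroup of `Aut(T)` is level-transitive if it acts transitively on every level. -/
def LevelTransitive (H : Subgroup (TAut d)) : Prop :=
  ∀ v w : Vertex d, v.length = w.length → ∃ g ∈ H, (g : Equiv.Perm (Vertex d)) v = w

/-- A subgroup of `Aut(T)` is self-similar if it contains all sections of its elements. -/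
def SelfSimilar (H : Subgroup (TAut d)) : Prop :=
  ∀ g ∈ H, ∀ v : Vertex d, sect g v ∈ H

/-- A subgroup of `Aut(T)` is fractal if it is self-similar, level-transitive, and for every
vertex `v` the section map maps the stabilizer of `v` onto the whole group. -/
def Fractal (H : Subgroup (TAut d)) : Prop :=
  SelfSimilar H ∧ LevelTransitive H ∧
    ∀ v : Vertex d, ∀ h ∈ H, ∃ k ∈ H, (k : Equiv.Perm (Vertex d)) v = v ∧ sect k v = h

/-- The geometric product `K_n` of `K` at level `n`: elements of `St(n)` all of whose sections
at level-`n` vertices lie in `K`. -/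
def geom (K : Subgroup (TAut d)) (n : ℕ) : Subgroup (TAut d) where
  carrier := {g | g ∈ lst d n ∧ ∀ v : Vertex d, v.length = n → sect g v ∈ K}
  one_mem' := ⟨one_mem _, fun v _ => by rw [sect_one]; exact one_mem K⟩
  mul_mem' := by
    rintro g h ⟨hg1, hg2⟩ ⟨hh1, hh2⟩
    refine ⟨mul_mem hg1 hh1, fun v hv => ?_⟩
    rw [sect_mul, hh1 v hv.le]
    exact mul_mem (hg2 v hv) (hh2 v hv)
  inv_mem' := by
    rintro g ⟨hg1, hg2⟩
    refine ⟨inv_mem hg1, fun v hv => ?_⟩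
    have hfix : ((g⁻¹ : TAut d) : Equiv.Perm (Vertex d)) v = v :=
      (inv_mem hg1 : g⁻¹ ∈ lst d n) v hv.le
    have h2 : sect g v * sect g⁻¹ v = 1 := by
      have := sect_mul g g⁻¹ v
      rw [mul_inv_cancel, sect_one, hfix] at this
      exact this.symm
    rw [(inv_eq_of_mul_eq_one_right h2).symm]
    exact inv_mem (hg2 v hv)

end TreeFT
namespace TreeFT

variable {d : ℕ}

/-- The congruence topology on `Aut(T)`: the topology of pointwise convergence on the vertex
set (each vertex set carrying the discrete topology); the level stabilizers `St(n)` form a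
base of neighborhoods of the identity for it. -/
instance tautTopologicalSpace (d : ℕ) : TopologicalSpace (TAut d) :=
  TopologicalSpace.induced
    (fun g : TAut d => ((g : Equiv.Perm (Vertex d)) : Vertex d → Vertex d))
    (@Pi.topologicalSpace (Vertex d) (fun _ => Vertex d) (fun _ => ⊥))

lemma isOpen_eval (d : ℕ) (v u : Vertex d) :
    IsOpen {g : TAut d | (g : Equiv.Perm (Vertex d)) v = u} := by
  letI : TopologicalSpace (Vertex d) := ⊥
  haveI : DiscreteTopology (Vertex d) := ⟨rfl⟩
  have h : IsOpen ((fun f : Vertex d → Vertex d => f v) ⁻¹' {u}) :=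
    (continuous_apply (A := fun _ => Vertex d) v).isOpen_preimage ({u} : Set (Vertex d)) (isOpen_discrete _)
  exact isOpen_induced h

lemma isOpen_eval_mem (d : ℕ) (v : Vertex d) (s : Set (Vertex d)) :
    IsOpen {g : TAut d | (g : Equiv.Perm (Vertex d)) v ∈ s} := by
  have h : {g : TAut d | (g : Equiv.Perm (Vertex d)) v ∈ s}
      = ⋃ u ∈ s, {g : TAut d | (g : Equiv.Perm (Vertex d)) v = u} := by
    ext g; simp
  rw [h]
  exact isOpen_biUnion fun u _ => isOpen_eval d v u

lemma continuous_into_vertex {X : Type*} [TopologicalSpace X] (f : X → Vertex d)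
    (h : ∀ u : Vertex d, IsOpen (f ⁻¹' {u})) :
    @Continuous X (Vertex d) _ ⊥ f := by
  rw [continuous_def]
  intro s _
  have hs : f ⁻¹' s = ⋃ u ∈ s, f ⁻¹' {u} := by
    ext x; simp
  rw [hs]
  exact isOpen_biUnion fun u _ => h u

instance tautContinuousMul (d : ℕ) : ContinuousMul (TAut d) := by
  constructor
  · -- continuity of multiplication
    apply continuous_induced_rng.2
    apply @continuous_pi _ _ _ _ (fun _ => (⊥ : TopologicalSpace (Vertex d)))
    intro v
    apply continuous_into_vertex
      (f := fun p : TAut d × TAut d => ((p.1 * p.2 : TAut d) : Equiv.Perm (Vertex d)) v)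
    intro u
    have h : (fun p : TAut d × TAut d =>
          ((p.1 * p.2 : TAut d) : Equiv.Perm (Vertex d)) v) ⁻¹' {u}
        = ⋃ w : Vertex d, ({g : TAut d | (g : Equiv.Perm (Vertex d)) w = u} ×ˢ
            {h : TAut d | (h : Equiv.Perm (Vertex d)) v = w}) := by
      ext p
      simp only [Set.mem_preimage, Set.mem_singleton_iff, Set.mem_iUnion, Set.mem_prod,
        Set.mem_setOf_eq]
      constructor
      · intro hp
        exact ⟨(p.2 : Equiv.Perm (Vertex d)) v, hp, rfl⟩
      · rintro ⟨w, hw1, hw2⟩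
        show (p.1 : Equiv.Perm (Vertex d)) ((p.2 : Equiv.Perm (Vertex d)) v) = u
        rw [hw2]; exact hw1
    rw [h]
    exact isOpen_iUnion fun w => (isOpen_eval d w u).prod (isOpen_eval d v w)

instance tautContinuousInv (d : ℕ) : ContinuousInv (TAut d) := by
  constructor
  · -- continuity of inversion
    apply continuous_induced_rng.2
    apply @continuous_pi _ _ _ _ (fun _ => (⊥ : TopologicalSpace (Vertex d)))
    intro v
    apply continuous_into_vertex
      (f := fun g : TAut d => ((g⁻¹ : TAut d) : Equiv.Perm (Vertex d)) v)
    intro u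
    have h : (fun g : TAut d => ((g⁻¹ : TAut d) : Equiv.Perm (Vertex d)) v) ⁻¹' {u}
        = {g : TAut d | (g : Equiv.Perm (Vertex d)) u = v} := by
      ext g
      simp only [Set.mem_preimage, Set.mem_singleton_iff, Set.mem_setOf_eq,
        InvMemClass.coe_inv]
      constructor
      · intro hg; rw [← hg, Equiv.Perm.apply_inv_self]
      · intro hg; rw [← hg, Equiv.Perm.inv_apply_self]
    rw [h]
    exact isOpen_eval d u v

instance tautTopologicalGroup (d : ℕ) : IsTopologicalGroup (TAut d) := ⟨⟩

/-- A subgroup of `Aut(T)` (viewed as a topological group with the congruence topology) is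
topologically finitely generated if it contains a finitely generated dense subgroup. -/
def TopFG (H : Subgroup (TAut d)) : Prop :=
  ∃ S : Set ↥H, S.Finite ∧ Dense ((Subgroup.closure S : Subgroup ↥H) : Set ↥H)

/-- A profinite group is just-infinite if it is infinite and every nontrivial closed normal
subgroup has finite index. -/
def JustInfinite (H : Subgroup (TAut d)) : Prop :=
  Infinite ↥H ∧ ∀ N : Subgroup ↥H, N.Normal → IsClosed (N : Set ↥H) → N ≠ ⊥ → N.index ≠ 0

/-- A profinite group is strongly complete if every subgroup of finite index is open. -/
def StronglyComplete (H : Subgroup (TAut d)) : Prop :=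
  ∀ N : Subgroup ↥H, N.index ≠ 0 → IsOpen (N : Set ↥H)

end TreeFT

namespace TreeFT

/-! ### Auxiliary lemmas for Statement 17 -/

variable {d : ℕ}

lemma sect_nil (g : TAut d) : sect g ([] : Vertex d) = g := by
  apply Subtype.ext
  apply Equiv.ext
  intro w
  simp [sect_apply]

lemma sect_inv' (g : TAut d) (v : Vertex d) :
    sect g⁻¹ v = (sect g ((g : Equiv.Perm (Vertex d))⁻¹ v))⁻¹ := by
  have h := sect_mul g g⁻¹ v
  rw [mul_inv_cancel, sect_one] at h
  have h2 : ((g⁻¹ : TAut d) : Equiv.Perm (Vertex d)) v = (g : Equiv.Perm (Vertex d))⁻¹ v := by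
    simp
  rw [h2] at h
  exact (inv_eq_of_mul_eq_one_right h.symm).symm

lemma coe_inv_apply (g : TAut d) (v : Vertex d) :
    ((g⁻¹ : TAut d) : Equiv.Perm (Vertex d)) v = (g : Equiv.Perm (Vertex d))⁻¹ v := by simp

lemma length_inv_apply (g : TAut d) (v : Vertex d) :
    ((g : Equiv.Perm (Vertex d))⁻¹ v).length = v.length := by
  have := length_apply g⁻¹ v
  rwa [coe_inv_apply] at this

/-- The key section formula for a triple product `g * k * g⁻¹`. -/
lemma sect_triple (g k : TAut d) (v : Vertex d) :
    sect (g * k * g⁻¹) v =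
      sect g ((k : Equiv.Perm (Vertex d)) ((g : Equiv.Perm (Vertex d))⁻¹ v)) *
        sect k ((g : Equiv.Perm (Vertex d))⁻¹ v) *
        (sect g ((g : Equiv.Perm (Vertex d))⁻¹ v))⁻¹ := by
  rw [sect_mul (g * k) g⁻¹ v, coe_inv_apply, sect_mul g k, sect_inv' g v]

/-- `Aut(T^D)` is a finite group. -/
instance fautFinite (d D : ℕ) : Finite (FAut d D) := by
  have hfin : Finite {l : Vertex d // l.length ≤ D} :=
    (List.finite_length_le (Fin d) D).to_subtype
  let F : TAut d → ({l : Vertex d // l.length ≤ D} → {l : Vertex d // l.length ≤ D}) :=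
    fun g v => ⟨(g : Equiv.Perm (Vertex d)) v.1, by rw [length_apply]; exact v.2⟩
  have hF : ∀ a b : TAut d, a⁻¹ * b ∈ lst d D → F a = F b := by
    intro a b hab
    funext v
    apply Subtype.ext
    have hv2 := hab v.1 v.2
    have hcoe : ((a⁻¹ * b : TAut d) : Equiv.Perm (Vertex d)) v.1
        = (a : Equiv.Perm (Vertex d))⁻¹ ((b : Equiv.Perm (Vertex d)) v.1) := by simp
    rw [hcoe] at hv2
    have h3 := congrArg (a : Equiv.Perm (Vertex d)) hv2
    rw [Equiv.Perm.apply_inv_self] at h3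
    exact h3.symm
  let Fbar : FAut d D → ({l : Vertex d // l.length ≤ D} → {l : Vertex d // l.length ≤ D}) :=
    fun x => Quotient.liftOn' x F (by
      intro a b hab
      exact hF a b ((QuotientGroup.leftRel_apply).1 hab))
  have hinj : Function.Injective Fbar := by
    intro x y
    induction x using Quotient.inductionOn'
    induction y using Quotient.inductionOn'
    rename_i a b
    intro hxy
    have hxy' : F a = F b := hxy
    apply Quotient.sound'
    rw [QuotientGroup.leftRel_apply]
    intro v hv
    have := congrFun hxy' ⟨v, hv⟩
    have hab : (a : Equiv.Perm (Vertex d)) v = (b : Equiv.Perm (Vertex d)) v :=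
      congrArg Subtype.val this
    have hcoe : ((a⁻¹ * b : TAut d) : Equiv.Perm (Vertex d)) v
        = (a : Equiv.Perm (Vertex d))⁻¹ ((b : Equiv.Perm (Vertex d)) v) := by simp
    rw [hcoe, ← hab, Equiv.Perm.inv_apply_self]
  exact Finite.of_injective Fbar hinj

lemma map_conj_eq_of_le {G : Type*} [Group G] [Finite G] {P Q : Subgroup G} (B : G)
    (hle : P.map (MulAut.conj B).toMonoidHom ≤ Q) (hcard : Nat.card Q ≤ Nat.card P) :
    P.map (MulAut.conj B).toMonoidHom = Q := by
  have hinj : Function.Injective (MulAut.conj B).toMonoidHom := (MulAut.conj B).injective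
  have hc : Nat.card (P.map (MulAut.conj B).toMonoidHom) = Nat.card P :=
    (Nat.card_congr (P.equivMapOfInjective _ hinj).toEquiv).symm
  apply SetLike.coe_injective
  apply Set.eq_of_subset_of_ncard_le hle
  · rw [← Nat.card_coe_set_eq, ← Nat.card_coe_set_eq]
    calc Nat.card Q ≤ Nat.card P := hcard
      _ = Nat.card (P.map (MulAut.conj B).toMonoidHom) := hc.symm

lemma key_moreover (d D : ℕ) (P Q : Subgroup (FAut d D))
    (hminP : IsMinimalPattern d D P) (hminQ : IsMinimalPattern d D Q)
    (hfr : Fractal (gft d D P)) (g : TAut d)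
    (hconj : (gft d D P).map (MulAut.conj g).toMonoidHom = gft d D Q) :
    (∀ v : Vertex d, P.map (MulAut.conj (proj d D (sect g v))).toMonoidHom = Q) ∧
    (∀ v w : Vertex d, v.length = w.length →
      proj d D (sect g v) * (proj d D (sect g w))⁻¹ ∈ Q) := by
  set B : Vertex d → FAut d D := fun v => proj d D (sect g v) with hB
  have hGQ : ∀ k, k ∈ gft d D P → g * k * g⁻¹ ∈ gft d D Q := by
    intro k hk
    rw [← hconj]
    exact ⟨k, hk, by simp [MulAut.conj_apply]⟩
  -- the section formula at a vertex of the form g v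
  have hsect : ∀ (k : TAut d) (v : Vertex d),
      sect (g * k * g⁻¹) ((g : Equiv.Perm (Vertex d)) v)
        = sect g ((k : Equiv.Perm (Vertex d)) v) * sect k v * (sect g v)⁻¹ := by
    intro k v
    rw [sect_triple, Equiv.Perm.inv_apply_self]
  -- inclusion (a)≤ : B v * p * (B v)⁻¹ ∈ Q for p ∈ P
  have hale : ∀ v : Vertex d, ∀ p ∈ P, B v * p * (B v)⁻¹ ∈ Q := by
    intro v p hp
    rw [← hminP] at hp
    obtain ⟨h, hh, hph⟩ := hp
    obtain ⟨k, hk, hkv, hsk⟩ := hfr.2.2 v h hh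
    have hm := hGQ k hk ((g : Equiv.Perm (Vertex d)) v)
    rw [hsect k v, hkv, hsk, map_mul, map_mul, map_inv, hph] at hm
    exact hm
  -- at the root : Q ≤ (B []) P (B [])⁻¹ up to cardinality
  have hcardQP : Nat.card Q ≤ Nat.card P := by
    have hroot : Q ≤ P.map (MulAut.conj (B [])).toMonoidHom := by
      intro q hq
      rw [← hminQ] at hq
      obtain ⟨h, hh, hqh⟩ := hq
      rw [← hconj] at hh
      obtain ⟨p, hp, hgp⟩ := hh
      refine ⟨proj d D p, ?_, ?_⟩
      · have := hp ([] : Vertex d)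
        rwa [sect_nil] at this
      · have hBnil : B [] = proj d D g := by rw [hB]; simp [sect_nil]
        simp only [MulEquiv.coe_toMonoidHom, MulAut.conj_apply]
        rw [hBnil, ← hqh, ← hgp]
        simp [MulAut.conj_apply]
    calc Nat.card Q ≤ Nat.card (P.map (MulAut.conj (B [])).toMonoidHom) :=
          Subgroup.card_le_of_le hroot
      _ = Nat.card P :=
          (Nat.card_congr (P.equivMapOfInjective _ (MulAut.conj (B [])).injective).toEquiv).symm
  -- (a) : equality at every vertex
  have ha : ∀ v : Vertex d, P.map (MulAut.conj (B v)).toMonoidHom = Q := by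
    intro v
    apply map_conj_eq_of_le (B v) _ hcardQP
    rintro x ⟨p, hp, rfl⟩
    simp only [MulEquiv.coe_toMonoidHom, MulAut.conj_apply]
    exact hale v p hp
  refine ⟨ha, ?_⟩
  -- (b)
  intro v w hlen
  obtain ⟨h, hh, hhw⟩ := hfr.2.1 w v hlen.symm
  have hm := hGQ h hh ((g : Equiv.Perm (Vertex d)) w)
  rw [hsect h w, hhw, map_mul, map_mul, map_inv] at hm
  have hp : proj d D (sect h w) ∈ P := hh w
  have h2 : B w * (proj d D (sect h w))⁻¹ * (B w)⁻¹ ∈ Q := hale w _ (inv_mem hp)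
  have he : B v * (B w)⁻¹
      = (B v * proj d D (sect h w) * (B w)⁻¹) * (B w * (proj d D (sect h w))⁻¹ * (B w)⁻¹) := by
    group
  rw [he]
  exact mul_mem hm h2

lemma key_sufficient (d D : ℕ) (P Q : Subgroup (FAut d D)) (g : TAut d)
    (ha : ∀ v : Vertex d, P.map (MulAut.conj (proj d D (sect g v))).toMonoidHom = Q)
    (hb : ∀ v w : Vertex d, v.length = w.length →
      proj d D (sect g v) * (proj d D (sect g w))⁻¹ ∈ Q) :
    (gft d D P).map (MulAut.conj g).toMonoidHom = gft d D Q := by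
  set B : Vertex d → FAut d D := fun v => proj d D (sect g v) with hB
  have haQ : ∀ v : Vertex d, ∀ p ∈ P, B v * p * (B v)⁻¹ ∈ Q := by
    intro v p hp
    rw [← ha v]
    exact ⟨p, hp, by simp only [MulEquiv.coe_toMonoidHom, MulAut.conj_apply]; rfl⟩
  have haP : ∀ v : Vertex d, ∀ q ∈ Q, (B v)⁻¹ * q * B v ∈ P := by
    intro v q hq
    rw [← ha v] at hq
    obtain ⟨p, hp, hpq⟩ := hq
    simp only [MulEquiv.coe_toMonoidHom, MulAut.conj_apply] at hpq
    have : (B v)⁻¹ * q * B v = p := by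
      rw [← hpq]
      show (proj d D (sect g v))⁻¹ * (proj d D (sect g v) * p * (proj d D (sect g v))⁻¹) * proj d D (sect g v) = p
      group
    rw [this]
    exact hp
  apply le_antisymm
  · rintro x ⟨h, hh, rfl⟩
    have hx : (MulAut.conj g).toMonoidHom h = g * h * g⁻¹ := by
      simp only [MulEquiv.coe_toMonoidHom, MulAut.conj_apply]
    rw [hx]
    intro v
    set u : Vertex d := (g : Equiv.Perm (Vertex d))⁻¹ v with hu
    rw [sect_triple g h v, map_mul, map_mul, map_inv]
    have h1 : B ((h : Equiv.Perm (Vertex d)) u) * (B u)⁻¹ ∈ Q :=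
      hb ((h : Equiv.Perm (Vertex d)) u) u (length_apply h u)
    have h2 : B u * proj d D (sect h u) * (B u)⁻¹ ∈ Q := haQ u _ (hh u)
    have he : B ((h : Equiv.Perm (Vertex d)) u) * proj d D (sect h u) * (B u)⁻¹
        = (B ((h : Equiv.Perm (Vertex d)) u) * (B u)⁻¹)
          * (B u * proj d D (sect h u) * (B u)⁻¹) := by group
    show B ((h : Equiv.Perm (Vertex d)) u) * proj d D (sect h u) * (B u)⁻¹ ∈ Q
    rw [he]
    exact mul_mem h1 h2
  · intro h hh
    refine ⟨g⁻¹ * h * g, ?_, ?_⟩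
    · intro v
      have hrw : g⁻¹ * h * g = g⁻¹ * h * (g⁻¹)⁻¹ := by rw [inv_inv]
      rw [hrw, sect_triple g⁻¹ h v]
      have hinv : ((g⁻¹ : TAut d) : Equiv.Perm (Vertex d))⁻¹ v
          = (g : Equiv.Perm (Vertex d)) v := by simp
      rw [hinv]
      set w : Vertex d := (g : Equiv.Perm (Vertex d)) v with hw
      set u' : Vertex d := (g : Equiv.Perm (Vertex d))⁻¹ ((h : Equiv.Perm (Vertex d)) w) with hu'
      have hsg : sect g⁻¹ ((h : Equiv.Perm (Vertex d)) w) = (sect g u')⁻¹ := sect_inv' g _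
      have hsg2 : sect g⁻¹ w = (sect g ((g : Equiv.Perm (Vertex d))⁻¹ w))⁻¹ := sect_inv' g _
      rw [hsg, hsg2, hw]
      rw [Equiv.Perm.inv_apply_self]
      simp only [map_mul, map_inv, inv_inv]
      have hq : proj d D (sect h w) ∈ Q := hh w
      have hlen : v.length = u'.length := by
        rw [hu', length_inv_apply, length_apply, hw, length_apply]
      have hx : B v * (B u')⁻¹ ∈ Q := hb v u' hlen
      have h1 : (B u')⁻¹ * proj d D (sect h w) * B u' ∈ P := haP u' _ hq
      have h2 : (B u')⁻¹ * (B v * (B u')⁻¹) * B u' ∈ P := haP u' _ hx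
      have he : (B u')⁻¹ * proj d D (sect h w) * B v
          = ((B u')⁻¹ * proj d D (sect h w) * B u')
            * ((B u')⁻¹ * (B v * (B u')⁻¹) * B u') := by group
      show (B u')⁻¹ * proj d D (sect h w) * B v ∈ P
      rw [he]
      exact mul_mem h1 h2
    · simp only [MulEquiv.coe_toMonoidHom, MulAut.conj_apply]
      group

/-- Let `P, Q ≤ Aut(T^D)` be minimal pattern subgroups and suppose `G_P` is
fractal.  Then `G_P` and `G_Q` are conjugate in `Aut(T)` if and only if there exists
`g ∈ Aut(T)` satisfying (a) `(g|_v^D) P (g|_v^D)⁻¹ = Q` for every vertex `v` and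
(b) `(g|_v^D)(g|_w^D)⁻¹ ∈ Q` for all vertices `v, w` of the same level.  Moreover every
`g ∈ Aut(T)` with `g G_P g⁻¹ = G_Q` satisfies (a) and (b). -/
theorem statement_17 (d D : ℕ) (hD : 1 ≤ D) (P Q : Subgroup (FAut d D))
    (hminP : IsMinimalPattern d D P) (hminQ : IsMinimalPattern d D Q)
    (hfr : Fractal (gft d D P)) :
    ((∃ g : TAut d, (gft d D P).map (MulAut.conj g).toMonoidHom = gft d D Q) ↔
      (∃ g : TAut d,
        (∀ v : Vertex d,
          P.map (MulAut.conj (proj d D (sect g v))).toMonoidHom = Q) ∧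
        (∀ v w : Vertex d, v.length = w.length →
          proj d D (sect g v) * (proj d D (sect g w))⁻¹ ∈ Q))) ∧
    (∀ g : TAut d, (gft d D P).map (MulAut.conj g).toMonoidHom = gft d D Q →
      (∀ v : Vertex d,
        P.map (MulAut.conj (proj d D (sect g v))).toMonoidHom = Q) ∧
      (∀ v w : Vertex d, v.length = w.length →
        proj d D (sect g v) * (proj d D (sect g w))⁻¹ ∈ Q)) := by
  constructor
  · constructor
    · rintro ⟨g, hconj⟩
      exact ⟨g, key_moreover d D P Q hminP hminQ hfr g hconj⟩
    · rintro ⟨g, ha, hb⟩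
      exact ⟨g, key_sufficient d D P Q g ha hb⟩
  · intro g hconj
    exact key_moreover d D P Q hminP hminQ hfr g hconj

end TreeFT
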